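/- Let G be a polymatrix coordination game with individual preferences, s' any joint strategy, and K the set of the k players with highest payoff under s'. Then the restricted game G[s'_K] (where players in K are fixed to play s'_K) is (k/n, 0)-smooth with respect to s': for every joint strategy s of the remaining players extended by s'_K on K, Σ_{v∈N} p_v(s'_v, s_{-v}) ≥ (k/n)·SW(s'). Consequently, every Nash equilibrium s of G[s'_K] satisfies SW(s'_K, s_{-K}) ≥ (k/n)·SW(s'). -/

import Mathlib

open Finset

/-- Let `s'` be any joint strategy of a polymatrix coordination game with
individual preferences and `K` the set of the `k` players with highest payoff under `s'`.
Then the game in which the players of `K` are fixed to `s'` is `(k/n, 0)`-smooth w.r.t. `s'`: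
for every profile `s` agreeing with `s'` on `K`, `Σ_v p_v(s'_v, s_{-v}) ≥ (k/n)·SW(s')`.
Consequently every Nash equilibrium `s` of the restricted game satisfies
`SW(s) ≥ (k/n)·SW(s')`. -/
theorem restricted_game_smoothness
    {N : Type*} [Fintype N] [DecidableEq N]
    (S : N → Type*) [∀ i, Fintype (S i)]
    (E : N → N → Prop) [∀ i j, Decidable (E i j)]
    (hE_symm : ∀ i j, E i j ↔ E j i) (hE_irrefl : ∀ i, ¬ E i i)
    (q : ∀ i, S i → ℝ) (hq : ∀ i x, 0 ≤ q i x)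
    (Q : ∀ i j, S i → S j → ℝ)
    (hQ_nonneg : ∀ i j x y, 0 ≤ Q i j x y)
    (hQ_symm : ∀ i j x y, Q i j x y = Q j i y x)
    (p : (∀ i, S i) → N → ℝ)
    (hp : ∀ s i, p s i = q i (s i) + ∑ j ∈ univ.filter (fun j => E i j), Q i j (s i) (s j))
    (SW : (∀ i, S i) → ℝ) (hSW : ∀ s, SW s = ∑ i, p s i)
    (n k : ℕ) (hn : n = Fintype.card N) (hkn : k ≤ n)
    (s' : ∀ i, S i)
    (K : Finset N) (hKcard : K.card = k)
    -- `K` consists of the `k` players with highest payoff under `s'`: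
    (hKtop : ∀ i ∈ K, ∀ j ∉ K, p s' j ≤ p s' i) :
    -- smoothness w.r.t. `s'` of the game where the players of `K` are fixed to `s'`
    (∀ s : ∀ i, S i, (∀ i ∈ K, s i = s' i) →
      (k : ℝ) / n * SW s' ≤ ∑ v, p (Function.update s v (s' v)) v) ∧
    -- hence every Nash equilibrium of the restricted game guarantees `(k/n)·SW(s')`
    (∀ s : ∀ i, S i, (∀ i ∈ K, s i = s' i) →
      (∀ v ∉ K, ∀ y : S v, p (Function.update s v y) v ≤ p s v) →
      (k : ℝ) / n * SW s' ≤ SW s) := by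
  -- The top-`k` players capture at least a `k/n` fraction of the social welfare.
  have hks : (k : ℝ) / n * SW s' ≤ ∑ j ∈ K, p s' j := by
    rcases Nat.eq_zero_or_pos n with hn0 | hn0
    · have hk0 : k = 0 := Nat.le_zero.mp (hn0 ▸ hkn)
      have hK0 : K = ∅ := Finset.card_eq_zero.mp (hKcard.trans hk0)
      simp [hk0, hK0]
    · have hnpos : (0 : ℝ) < n := by exact_mod_cast hn0
      rw [div_mul_eq_mul_div, div_le_iff₀ hnpos]
      have hsplit : SW s' = ∑ j ∈ K, p s' j + ∑ j ∈ Kᶜ, p s' j := by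
        rw [hSW]; exact (Finset.sum_add_sum_compl K _).symm
      have hcard : (Kᶜ.card : ℝ) = (n : ℝ) - k := by
        rw [Finset.card_compl, hKcard, ← hn, Nat.cast_sub hkn]
      have hpair : (k : ℝ) * ∑ j ∈ Kᶜ, p s' j ≤ ((n : ℝ) - k) * ∑ i ∈ K, p s' i := by
        have h := Finset.sum_le_sum (s := K)
          (f := fun _ => ∑ j ∈ Kᶜ, p s' j) (g := fun i => ∑ _j ∈ Kᶜ, p s' i)
          (fun i hi => Finset.sum_le_sum fun j hj => hKtop i hi j (Finset.mem_compl.mp hj))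
        simpa [Finset.sum_const, nsmul_eq_mul, hKcard, hcard, ← Finset.sum_mul,
          mul_left_comm, mul_comm] using h
      rw [hsplit]
      nlinarith [hpair]
  -- Per-player lower bound for the deviation payoff.
  have hlow : ∀ s : ∀ i, S i, (∀ i ∈ K, s i = s' i) → ∀ v,
      q v (s' v) + ∑ j ∈ K.filter (fun j => E v j), Q v j (s' v) (s' j)
        ≤ p (Function.update s v (s' v)) v := by
    intro s hs v
    rw [hp, Function.update_self]
    have hrw : ∑ j ∈ univ.filter (fun j => E v j), Q v j (s' v) (Function.update s v (s' v) j)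
        = ∑ j ∈ univ.filter (fun j => E v j), Q v j (s' v) (s j) := by
      refine Finset.sum_congr rfl fun j hj => ?_
      have hne : j ≠ v := fun h => hE_irrefl v (h ▸ (Finset.mem_filter.mp hj).2)
      rw [Function.update_of_ne hne]
    have h2 : ∑ j ∈ K.filter (fun j => E v j), Q v j (s' v) (s' j)
        = ∑ j ∈ K.filter (fun j => E v j), Q v j (s' v) (s j) := by
      refine Finset.sum_congr rfl fun j hj => ?_
      rw [hs j (Finset.mem_filter.mp hj).1]
    rw [hrw, h2]
    refine add_le_add_right (Finset.sum_le_sum_of_subset_of_nonneg ?_ ?_) _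
    · exact Finset.filter_subset_filter _ (Finset.subset_univ K)
    · exact fun j _ _ => hQ_nonneg _ _ _ _
  -- Summing the lower bounds dominates the welfare of `K` under `s'`.
  have hKsum : ∀ s : ∀ i, S i, (∀ i ∈ K, s i = s' i) →
      ∑ j ∈ K, p s' j ≤ ∑ v, p (Function.update s v (s' v)) v := by
    intro s hs
    have hswap : ∑ v, ∑ j ∈ K.filter (fun j => E v j), Q v j (s' v) (s' j)
        = ∑ j ∈ K, ∑ v ∈ univ.filter (fun v => E j v), Q j v (s' j) (s' v) := by
      simp_rw [Finset.sum_filter]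
      rw [Finset.sum_comm]
      refine Finset.sum_congr rfl fun j _ => Finset.sum_congr rfl fun v _ => ?_
      by_cases h : E v j
      · rw [if_pos h, if_pos ((hE_symm v j).mp h), hQ_symm]
      · rw [if_neg h, if_neg (fun h' => h ((hE_symm j v).mp h'))]
    calc ∑ j ∈ K, p s' j
        = ∑ j ∈ K, q j (s' j) + ∑ j ∈ K, ∑ v ∈ univ.filter (fun v => E j v), Q j v (s' j) (s' v) := by
          simp_rw [hp]; rw [Finset.sum_add_distrib]
      _ ≤ ∑ v, q v (s' v) + ∑ j ∈ K, ∑ v ∈ univ.filter (fun v => E j v), Q j v (s' j) (s' v) := by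
          refine add_le_add_left (Finset.sum_le_sum_of_subset_of_nonneg
            (Finset.subset_univ K) fun j _ _ => hq _ _) _
      _ = ∑ v, (q v (s' v) + ∑ j ∈ K.filter (fun j => E v j), Q v j (s' v) (s' j)) := by
          rw [Finset.sum_add_distrib, hswap]
      _ ≤ ∑ v, p (Function.update s v (s' v)) v :=
          Finset.sum_le_sum fun v _ => hlow s hs v
  have hmain : ∀ s : ∀ i, S i, (∀ i ∈ K, s i = s' i) →
      (k : ℝ) / n * SW s' ≤ ∑ v, p (Function.update s v (s' v)) v :=
    fun s hs => le_trans hks (hKsum s hs)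
  refine ⟨hmain, fun s hs hnash => ?_⟩
  calc (k : ℝ) / n * SW s' ≤ ∑ v, p (Function.update s v (s' v)) v := hmain s hs
    _ ≤ ∑ v, p s v := by
        refine Finset.sum_le_sum fun v _ => ?_
        by_cases hv : v ∈ K
        · have : Function.update s v (s' v) = s := by
            rw [← hs v hv]; exact Function.update_eq_self v s
          rw [this]
        · exact hnash v hv (s' v)
    _ = SW s := (hSW s).symm
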